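/- Let g : ℝⁿ → ℝ be convex and L-Lipschitz with ∫ exp(−g(x)) dx = 1, let λ > 0, let g^λ be the Moreau–Yosida envelope of g, let Z_λ = ∫ exp(−g^λ(z)) dz, and set π(x) = exp(−g(x)) and π^λ(x) = exp(−g^λ(x))/Z_λ. Then for any f : ℝⁿ → ℝ that is integrable with respect to both π(x)dx and π^λ(x)dx, one has |∫ f π^λ dx − ∫ f π dx| ≤ (exp(L²λ) − 1) ∫ |f| π dx. -/

import Mathlib

open MeasureTheory

/-- The Moreau–Yosida envelope of `g` with parameter `lam`. -/
noncomputable def mye {n : ℕ} (g : EuclideanSpace ℝ (Fin n) → ℝ) (lam : ℝ)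
    (x : EuclideanSpace ℝ (Fin n)) : ℝ :=
  ⨅ z : EuclideanSpace ℝ (Fin n), (g z + ‖x - z‖ ^ 2 / (2 * lam))

section aux

variable {n : ℕ} {g : EuclideanSpace ℝ (Fin n) → ℝ} {L lam : ℝ}

lemma mye_key (hLip : ∀ x y, |g x - g y| ≤ L * ‖x - y‖) (hlam : 0 < lam)
    (x z : EuclideanSpace ℝ (Fin n)) :
    g x - L ^ 2 * lam / 2 ≤ g z + ‖x - z‖ ^ 2 / (2 * lam) := by
  have h1 : g x - g z ≤ L * ‖x - z‖ := le_of_abs_le (hLip x z)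
  have h2 : 0 ≤ (‖x - z‖ - L * lam) ^ 2 / (2 * lam) :=
    div_nonneg (sq_nonneg _) (by linarith)
  have hexp : (‖x - z‖ - L * lam) ^ 2 / (2 * lam) =
      ‖x - z‖ ^ 2 / (2 * lam) - L * ‖x - z‖ + L ^ 2 * lam / 2 := by
    field_simp
    ring
  rw [hexp] at h2
  linarith

lemma mye_bdd (hLip : ∀ x y, |g x - g y| ≤ L * ‖x - y‖) (hlam : 0 < lam)
    (x : EuclideanSpace ℝ (Fin n)) :
    BddBelow (Set.range fun z => g z + ‖x - z‖ ^ 2 / (2 * lam)) := by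
  refine ⟨g x - L ^ 2 * lam / 2, ?_⟩
  rintro _ ⟨z, rfl⟩
  exact mye_key hLip hlam x z

lemma mye_le (hLip : ∀ x y, |g x - g y| ≤ L * ‖x - y‖) (hlam : 0 < lam)
    (x : EuclideanSpace ℝ (Fin n)) : mye g lam x ≤ g x := by
  have := ciInf_le (mye_bdd hLip hlam x) x
  simpa [mye] using this

lemma le_mye (hLip : ∀ x y, |g x - g y| ≤ L * ‖x - y‖) (hlam : 0 < lam)
    (x : EuclideanSpace ℝ (Fin n)) : g x - L ^ 2 * lam / 2 ≤ mye g lam x :=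
  le_ciInf (mye_key hLip hlam x)

lemma mye_lip (hLip : ∀ x y, |g x - g y| ≤ L * ‖x - y‖) (hlam : 0 < lam)
    (x y : EuclideanSpace ℝ (Fin n)) :
    mye g lam x ≤ mye g lam y + L * ‖x - y‖ := by
  have h : ∀ z, mye g lam x - L * ‖x - y‖ ≤ g z + ‖y - z‖ ^ 2 / (2 * lam) := by
    intro z
    have h1 : mye g lam x ≤ g (z + (x - y)) + ‖x - (z + (x - y))‖ ^ 2 / (2 * lam) :=
      ciInf_le (mye_bdd hLip hlam x) _
    have h2 : g (z + (x - y)) - g z ≤ L * ‖z + (x - y) - z‖ :=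
      le_of_abs_le (hLip _ z)
    have e1 : z + (x - y) - z = x - y := by abel
    have e2 : x - (z + (x - y)) = y - z := by abel
    rw [e1] at h2
    rw [e2] at h1
    linarith
  have := le_ciInf h
  have hm : mye g lam y = ⨅ z, (g z + ‖y - z‖ ^ 2 / (2 * lam)) := rfl
  linarith [hm ▸ this]

lemma mye_continuous (hLip : ∀ x y, |g x - g y| ≤ L * ‖x - y‖) (hlam : 0 < lam) :
    Continuous (mye g lam) := by
  have h : LipschitzWith (Real.toNNReal L) (mye g lam) := by
    apply LipschitzWith.of_dist_le_mul
    intro x y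
    rw [Real.dist_eq, dist_eq_norm]
    have h1 := mye_lip hLip hlam x y
    have h2 := mye_lip hLip hlam y x
    rw [norm_sub_rev y x] at h2
    have hL : L * ‖x - y‖ ≤ (Real.toNNReal L : ℝ) * ‖x - y‖ := by
      apply mul_le_mul_of_nonneg_right _ (norm_nonneg _)
      exact Real.le_coe_toNNReal L
    rw [abs_le]
    constructor <;> linarith
  exact h.continuous

end aux

theorem stmt_4 {n : ℕ} (g : EuclideanSpace ℝ (Fin n) → ℝ) (L lam : ℝ)
    (hconv : ConvexOn ℝ Set.univ g)
    (hLip : ∀ x y, |g x - g y| ≤ L * ‖x - y‖)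
    (hlam : 0 < lam)
    (hnorm : ∫ x : EuclideanSpace ℝ (Fin n), Real.exp (-g x) = 1)
    (f : EuclideanSpace ℝ (Fin n) → ℝ)
    (hf : Integrable (fun x => f x * Real.exp (-g x)))
    (hflam : Integrable (fun x =>
      f x * (Real.exp (-(mye g lam x)) /
        ∫ z : EuclideanSpace ℝ (Fin n), Real.exp (-(mye g lam z))))) :
    |(∫ x, f x * (Real.exp (-(mye g lam x)) /
          ∫ z : EuclideanSpace ℝ (Fin n), Real.exp (-(mye g lam z)))) -
        ∫ x, f x * Real.exp (-g x)| ≤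
      (Real.exp (L ^ 2 * lam) - 1) * ∫ x, |f x| * Real.exp (-g x) := by
  set C : ℝ := Real.exp (L ^ 2 * lam / 2) with hC
  have hC1 : 1 ≤ C := Real.one_le_exp (by positivity)
  -- pointwise bounds on exponentials
  have hub : ∀ x, Real.exp (-(mye g lam x)) ≤ C * Real.exp (-g x) := by
    intro x
    rw [hC, ← Real.exp_add]
    apply Real.exp_le_exp.mpr
    have := le_mye hLip hlam x
    linarith
  have hlb : ∀ x, Real.exp (-g x) ≤ Real.exp (-(mye g lam x)) := by
    intro x
    apply Real.exp_le_exp.mpr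
    have := mye_le hLip hlam x
    linarith
  -- integrability of exp(-g)
  have hg_int : Integrable (fun x : EuclideanSpace ℝ (Fin n) => Real.exp (-g x)) := by
    by_contra h
    rw [integral_undef h] at hnorm
    norm_num at hnorm
  -- continuity of g (Lipschitz)
  have hg_cont : Continuous g := by
    have h : LipschitzWith (Real.toNNReal L) g := by
      apply LipschitzWith.of_dist_le_mul
      intro x y
      rw [Real.dist_eq, dist_eq_norm]
      calc |g x - g y| ≤ L * ‖x - y‖ := hLip x y
        _ ≤ (Real.toNNReal L : ℝ) * ‖x - y‖ :=
          mul_le_mul_of_nonneg_right (Real.le_coe_toNNReal L) (norm_nonneg _)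
    exact h.continuous
  -- integrability of exp(-mye)
  have hmye_int : Integrable (fun x : EuclideanSpace ℝ (Fin n) => Real.exp (-(mye g lam x))) := by
    apply (hg_int.const_mul C).mono
    · exact (((mye_continuous hLip hlam).neg).rexp).aestronglyMeasurable
    · filter_upwards with x
      rw [Real.norm_eq_abs, Real.norm_eq_abs, abs_of_pos (Real.exp_pos _),
        abs_of_pos (by positivity : (0:ℝ) < C * Real.exp (-g x))]
      exact hub x
  set Z : ℝ := ∫ z : EuclideanSpace ℝ (Fin n), Real.exp (-(mye g lam z)) with hZ
  have hZ1 : 1 ≤ Z := by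
    rw [hZ, ← hnorm]
    exact integral_mono hg_int hmye_int hlb
  have hZC : Z ≤ C := by
    calc Z ≤ ∫ x : EuclideanSpace ℝ (Fin n), C * Real.exp (-g x) :=
          integral_mono hmye_int (hg_int.const_mul C) hub
      _ = C * ∫ x : EuclideanSpace ℝ (Fin n), Real.exp (-g x) := integral_const_mul _ _
      _ = C := by rw [hnorm, mul_one]
  have hZ0 : 0 < Z := lt_of_lt_of_le one_pos hZ1
  -- pointwise bound on densities
  have hpt : ∀ x, |Real.exp (-(mye g lam x)) / Z - Real.exp (-g x)| ≤
      (Real.exp (L ^ 2 * lam) - 1) * Real.exp (-g x) := by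
    intro x
    set a := Real.exp (-g x) with ha
    set b := Real.exp (-(mye g lam x)) with hb
    have ha0 : 0 < a := Real.exp_pos _
    have hab : a ≤ b := hlb x
    have hbC : b ≤ C * a := hub x
    have hCC : C * C = Real.exp (L ^ 2 * lam) := by
      rw [hC, ← Real.exp_add]; ring_nf
    have h1 : b / Z - a ≤ (C * C - 1) * a := by
      have : b / Z ≤ b := by
        rw [div_le_iff₀ hZ0]
        nlinarith [Real.exp_pos (-(mye g lam x))]
      nlinarith
    have h2 : a - b / Z ≤ (C * C - 1) * a := by
      have hC0 : (0:ℝ) < C := lt_of_lt_of_le one_pos hC1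
      have hb0 : (0:ℝ) < b := Real.exp_pos _
      have hbz : a / C ≤ b / Z := div_le_div₀ (by positivity) hab hZ0 hZC
      rw [div_le_iff₀ hC0] at hbz
      have huz : b / Z ≤ b := by
        rw [div_le_iff₀ hZ0]
        nlinarith
      have step1 : a - b / Z ≤ b / Z * (C - 1) := by nlinarith
      have step2 : b / Z * (C - 1) ≤ C * a * (C - 1) :=
        mul_le_mul_of_nonneg_right (huz.trans hbC) (sub_nonneg.2 hC1)
      have step3 : C * a * (C - 1) ≤ (C * C - 1) * a := by
        nlinarith [mul_nonneg ha0.le (sub_nonneg.2 hC1)]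
      linarith
    rw [← hCC, abs_le]
    constructor <;> linarith
  -- integrability of |f| * exp(-g)
  have habs : Integrable (fun x => |f x| * Real.exp (-g x)) := by
    simpa [abs_mul, Real.abs_exp] using hf.abs
  set E : ℝ := Real.exp (L ^ 2 * lam) with hE
  have key : ∀ x, |f x * (Real.exp (-(mye g lam x)) / Z) - f x * Real.exp (-g x)| ≤
      (E - 1) * (|f x| * Real.exp (-g x)) := by
    intro x
    rw [← mul_sub, abs_mul]
    calc |f x| * |Real.exp (-(mye g lam x)) / Z - Real.exp (-g x)|
        ≤ |f x| * ((E - 1) * Real.exp (-g x)) :=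
          mul_le_mul_of_nonneg_left (hpt x) (abs_nonneg _)
      _ = (E - 1) * (|f x| * Real.exp (-g x)) := by ring
  calc |(∫ x, f x * (Real.exp (-(mye g lam x)) / Z)) - ∫ x, f x * Real.exp (-g x)|
      = |∫ x, (f x * (Real.exp (-(mye g lam x)) / Z) - f x * Real.exp (-g x))| := by
        rw [integral_sub hflam hf]
    _ ≤ ∫ x, |f x * (Real.exp (-(mye g lam x)) / Z) - f x * Real.exp (-g x)| := by
        simpa [Real.norm_eq_abs] using
          norm_integral_le_integral_norm
            (fun x => f x * (Real.exp (-(mye g lam x)) / Z) - f x * Real.exp (-g x))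
    _ ≤ ∫ x, (E - 1) * (|f x| * Real.exp (-g x)) :=
        integral_mono (hflam.sub hf).abs (habs.const_mul _) key
    _ = (E - 1) * ∫ x, |f x| * Real.exp (-g x) := integral_const_mul _ _
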